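/- The trinomial generalized Galois numbers G_n^{(3)} = Σ_{k_1+k_2+k_3 = n} C(n; k_1,k_2,k_3)_q satisfy G_{n+1}^{(3)} = 3G_n^{(3)} + 3(q^n - 1)G_{n-1}^{(3)} + (q^n - 1)(q^{n-1} - 1)G_{n-2}^{(3)} for n ≥ 2. -/

import Mathlib

/-- `(q)_n = (1-q)(1-q^2)⋯(1-q^n)`, with `(q)_0 = 1`. -/
noncomputable def qPoch {K : Type*} [Field K] (q : K) (n : ℕ) : K :=
  ∏ j ∈ Finset.range n, (1 - q ^ (j + 1))

/-- The trinomial generalized Galois number `G_n^{(3)} = Σ_{k_1+k_2+k_3=n} C(n;k_1,k_2,k_3)_q`. -/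
noncomputable def galois3 {K : Type*} [Field K] (q : K) (n : ℕ) : K :=
  ∑ k ∈ Finset.Nat.antidiagonalTuple 3 n,
    qPoch q n / (qPoch q (k 0) * qPoch q (k 1) * qPoch q (k 2))

namespace Galois3Aux

variable {K : Type*} [Field K]

noncomputable def T (q : K) (n : ℕ) (k : Fin 3 → ℕ) : K :=
  qPoch q n / (qPoch q (k 0) * qPoch q (k 1) * qPoch q (k 2))

lemma galois3_eq (q : K) (n : ℕ) :
    galois3 q n = ∑ k ∈ Finset.Nat.antidiagonalTuple 3 n, T q n k := rfl

noncomputable def S1 (q : K) (n : ℕ) : K :=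
  ∑ k ∈ Finset.Nat.antidiagonalTuple 3 n, q ^ (k 0) * T q n k

noncomputable def S1' (q : K) (n : ℕ) : K :=
  ∑ k ∈ Finset.Nat.antidiagonalTuple 3 n, q ^ (k 1) * T q n k

noncomputable def S2 (q : K) (n : ℕ) : K :=
  ∑ k ∈ Finset.Nat.antidiagonalTuple 3 n, q ^ (k 0) * q ^ (k 1) * T q n k

variable {q : K} (hq : ∀ j : ℕ, 1 ≤ j → 1 - q ^ j ≠ 0)
include hq

lemma qPoch_ne_zero (n : ℕ) : qPoch q n ≠ 0 := by
  refine Finset.prod_ne_zero_iff.2 fun j _ => hq (j + 1) (by omega)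

lemma T_dec (n a b c : ℕ) (ha : 1 ≤ a) :
    (1 - q ^ a) * (qPoch q (n+1) / (qPoch q a * qPoch q b * qPoch q c)) =
      (1 - q ^ (n+1)) * (qPoch q n / (qPoch q (a-1) * qPoch q b * qPoch q c)) := by
  obtain ⟨a', rfl⟩ : ∃ a', a = a' + 1 := ⟨a - 1, by omega⟩
  simp only [Nat.add_sub_cancel, qPoch, Finset.prod_range_succ]
  have h1 := qPoch_ne_zero hq n
  have h2 := qPoch_ne_zero hq a'
  have h3 := qPoch_ne_zero hq b
  have h4 := qPoch_ne_zero hq c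
  have h5 := hq (a' + 1) (by omega)
  have h6 := hq (n + 1) (by omega)
  simp only [qPoch] at *
  field_simp

lemma T_dec1 (n a b c : ℕ) (hb : 1 ≤ b) :
    (1 - q ^ b) * (qPoch q (n+1) / (qPoch q a * qPoch q b * qPoch q c)) =
      (1 - q ^ (n+1)) * (qPoch q n / (qPoch q a * qPoch q (b-1) * qPoch q c)) := by
  rw [show qPoch q a * qPoch q b * qPoch q c = qPoch q b * qPoch q a * qPoch q c by ring,
    show qPoch q a * qPoch q (b-1) * qPoch q c = qPoch q (b-1) * qPoch q a * qPoch q c by ring]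
  exact T_dec hq n b a c hb

lemma T_dec2 (n a b c : ℕ) (hc : 1 ≤ c) :
    (1 - q ^ c) * (qPoch q (n+1) / (qPoch q a * qPoch q b * qPoch q c)) =
      (1 - q ^ (n+1)) * (qPoch q n / (qPoch q a * qPoch q b * qPoch q (c-1))) := by
  rw [show qPoch q a * qPoch q b * qPoch q c = qPoch q c * qPoch q a * qPoch q b by ring,
    show qPoch q a * qPoch q b * qPoch q (c-1) = qPoch q (c-1) * qPoch q a * qPoch q b by ring]
  exact T_dec hq n c a b hc

lemma key1 (n : ℕ) (w : (Fin 3 → ℕ) → K) :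
    ∑ k ∈ Finset.Nat.antidiagonalTuple 3 (n+1), (1 - q ^ (k 1)) * w k * T q (n+1) k
    = (1 - q ^ (n+1)) * ∑ j ∈ Finset.Nat.antidiagonalTuple 3 n, w ![j 0, j 1 + 1, j 2] * T q n j := by
  rw [Finset.mul_sum,
    ← Finset.sum_filter_of_ne (p := fun k : Fin 3 → ℕ => k 1 ≠ 0)
      (fun k _ h h0 => h (by rw [h0]; simp))]
  refine Finset.sum_bij' (fun k _ => ![k 0, k 1 - 1, k 2]) (fun j _ => ![j 0, j 1 + 1, j 2])
    ?_ ?_ ?_ ?_ ?_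
  · intro k hk
    simp only [Finset.mem_filter, Finset.Nat.mem_antidiagonalTuple, Fin.sum_univ_three] at hk ⊢
    simp only [Matrix.cons_val_zero, Matrix.cons_val_one, Matrix.head_cons,
      Matrix.cons_val_two, Matrix.tail_cons]
    omega
  · intro j hj
    simp only [Finset.mem_filter, Finset.Nat.mem_antidiagonalTuple, Fin.sum_univ_three] at hj ⊢
    simp only [Matrix.cons_val_zero, Matrix.cons_val_one, Matrix.head_cons,
      Matrix.cons_val_two, Matrix.tail_cons]
    omega
  · intro k hk
    simp only [Finset.mem_filter] at hk
    funext x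
    fin_cases x <;> simp <;> omega
  · intro j hj
    funext x
    fin_cases x <;> simp <;> omega
  · intro k hk
    simp only [Finset.mem_filter] at hk
    have hk0 : 1 ≤ k 1 := by omega
    have hinv : ![k 0, k 1 - 1 + 1, k 2] = k := by
      funext x
      fin_cases x <;> simp <;> omega
    have hT : T q n ![k 0, k 1 - 1, k 2] =
        qPoch q n / (qPoch q (k 0) * qPoch q (k 1 - 1) * qPoch q (k 2)) := by
      simp [T]
    simp only [Matrix.cons_val_zero, Matrix.cons_val_one, Matrix.head_cons, Matrix.cons_val_two,
      Matrix.tail_cons]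
    rw [hinv, hT, T, mul_comm (1 - q ^ k 1) (w k), mul_assoc,
      T_dec1 hq n _ _ _ hk0]
    ring
lemma key2 (n : ℕ) (w : (Fin 3 → ℕ) → K) :
    ∑ k ∈ Finset.Nat.antidiagonalTuple 3 (n+1), (1 - q ^ (k 2)) * w k * T q (n+1) k
    = (1 - q ^ (n+1)) * ∑ j ∈ Finset.Nat.antidiagonalTuple 3 n, w ![j 0, j 1, j 2 + 1] * T q n j := by
  rw [Finset.mul_sum,
    ← Finset.sum_filter_of_ne (p := fun k : Fin 3 → ℕ => k 2 ≠ 0)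
      (fun k _ h h0 => h (by rw [h0]; simp))]
  refine Finset.sum_bij' (fun k _ => ![k 0, k 1, k 2 - 1]) (fun j _ => ![j 0, j 1, j 2 + 1])
    ?_ ?_ ?_ ?_ ?_
  · intro k hk
    simp only [Finset.mem_filter, Finset.Nat.mem_antidiagonalTuple, Fin.sum_univ_three] at hk ⊢
    simp only [Matrix.cons_val_zero, Matrix.cons_val_one, Matrix.head_cons,
      Matrix.cons_val_two, Matrix.tail_cons]
    omega
  · intro j hj
    simp only [Finset.mem_filter, Finset.Nat.mem_antidiagonalTuple, Fin.sum_univ_three] at hj ⊢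
    simp only [Matrix.cons_val_zero, Matrix.cons_val_one, Matrix.head_cons,
      Matrix.cons_val_two, Matrix.tail_cons]
    omega
  · intro k hk
    simp only [Finset.mem_filter] at hk
    funext x
    fin_cases x <;> simp <;> omega
  · intro j hj
    funext x
    fin_cases x <;> simp <;> omega
  · intro k hk
    simp only [Finset.mem_filter] at hk
    have hk0 : 1 ≤ k 2 := by omega
    have hinv : ![k 0, k 1, k 2 - 1 + 1] = k := by
      funext x
      fin_cases x <;> simp <;> omega
    have hT : T q n ![k 0, k 1, k 2 - 1] =
        qPoch q n / (qPoch q (k 0) * qPoch q (k 1) * qPoch q (k 2 - 1)) := by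
      simp [T]
    simp only [Matrix.cons_val_zero, Matrix.cons_val_one, Matrix.head_cons, Matrix.cons_val_two,
      Matrix.tail_cons]
    rw [hinv, hT, T, mul_comm (1 - q ^ k 2) (w k), mul_assoc,
      T_dec2 hq n _ _ _ hk0]
    ring
lemma key0 (n : ℕ) (w : (Fin 3 → ℕ) → K) :
    ∑ k ∈ Finset.Nat.antidiagonalTuple 3 (n+1), (1 - q ^ (k 0)) * w k * T q (n+1) k
    = (1 - q ^ (n+1)) * ∑ j ∈ Finset.Nat.antidiagonalTuple 3 n, w ![j 0 + 1, j 1, j 2] * T q n j := by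
  rw [Finset.mul_sum,
    ← Finset.sum_filter_of_ne (p := fun k : Fin 3 → ℕ => k 0 ≠ 0)
      (fun k _ h h0 => h (by rw [h0]; simp))]
  refine Finset.sum_bij' (fun k _ => ![k 0 - 1, k 1, k 2]) (fun j _ => ![j 0 + 1, j 1, j 2])
    ?_ ?_ ?_ ?_ ?_
  · intro k hk
    simp only [Finset.mem_filter, Finset.Nat.mem_antidiagonalTuple, Fin.sum_univ_three] at hk ⊢
    simp only [Matrix.cons_val_zero, Matrix.cons_val_one, Matrix.head_cons,
      Matrix.cons_val_two, Matrix.tail_cons]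
    omega
  · intro j hj
    simp only [Finset.mem_filter, Finset.Nat.mem_antidiagonalTuple, Fin.sum_univ_three] at hj ⊢
    simp only [Matrix.cons_val_zero, Matrix.cons_val_one, Matrix.head_cons,
      Matrix.cons_val_two, Matrix.tail_cons]
    omega
  · intro k hk
    simp only [Finset.mem_filter] at hk
    funext x
    fin_cases x <;> simp <;> omega
  · intro j hj
    funext x
    fin_cases x <;> simp <;> omega
  · intro k hk
    simp only [Finset.mem_filter] at hk
    have hk0 : 1 ≤ k 0 := by omega
    have hinv : ![k 0 - 1 + 1, k 1, k 2] = k := by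
      funext x
      fin_cases x <;> simp <;> omega
    have hT : T q n ![k 0 - 1, k 1, k 2] =
        qPoch q n / (qPoch q (k 0 - 1) * qPoch q (k 1) * qPoch q (k 2)) := by
      simp [T]
    simp only [Matrix.cons_val_zero, Matrix.cons_val_one, Matrix.head_cons, Matrix.cons_val_two,
      Matrix.tail_cons]
    rw [hinv, hT, T, mul_comm (1 - q ^ k 0) (w k), mul_assoc,
      T_dec hq n _ _ _ hk0]
    ring

lemma sumA (n : ℕ) : S1 q (n+1) = galois3 q (n+1) - (1 - q ^ (n+1)) * galois3 q n := by
  have h := key0 hq n (fun _ => (1 : K))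
  simp only [mul_one, one_mul] at h
  have e : ∀ k ∈ Finset.Nat.antidiagonalTuple 3 (n+1),
      (1 - q ^ (k 0)) * T q (n+1) k = T q (n+1) k - q ^ (k 0) * T q (n+1) k :=
    fun k _ => by ring
  rw [Finset.sum_congr rfl e, Finset.sum_sub_distrib] at h
  rw [S1, galois3_eq, galois3_eq]
  linear_combination -h

lemma sumB (n : ℕ) : S1' q (n+1) = galois3 q (n+1) - (1 - q ^ (n+1)) * galois3 q n := by
  have h := key1 hq n (fun _ => (1 : K))
  simp only [mul_one, one_mul] at h
  have e : ∀ k ∈ Finset.Nat.antidiagonalTuple 3 (n+1),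
      (1 - q ^ (k 1)) * T q (n+1) k = T q (n+1) k - q ^ (k 1) * T q (n+1) k :=
    fun k _ => by ring
  rw [Finset.sum_congr rfl e, Finset.sum_sub_distrib] at h
  rw [S1', galois3_eq, galois3_eq]
  linear_combination -h

lemma sumC (n : ℕ) :
    ∑ k ∈ Finset.Nat.antidiagonalTuple 3 (n+2),
        (1 - q ^ (k 0)) * (1 - q ^ (k 1)) * T q (n+2) k
      = (1 - q ^ (n+2)) * ((1 - q ^ (n+1)) * galois3 q n) := by
  have h := key0 hq (n+1) (fun k => 1 - q ^ (k 1))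
  simp only [Matrix.cons_val_one, Matrix.head_cons, Matrix.cons_val_zero] at h
  have h2 := key1 hq n (fun _ => (1 : K))
  simp only [mul_one, one_mul] at h2
  rw [h, h2, galois3_eq]

lemma pascal (n : ℕ) : galois3 q (n+1) = galois3 q n + S1 q n + S2 q n := by
  apply mul_left_cancel₀ (hq (n+1) (by omega))
  have per : ∀ k ∈ Finset.Nat.antidiagonalTuple 3 (n+1),
      (1 - q ^ (n+1)) * T q (n+1) k =
        (1 - q ^ (k 0)) * (1 : K) * T q (n+1) k
          + (1 - q ^ (k 1)) * (q ^ (k 0)) * T q (n+1) k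
          + (1 - q ^ (k 2)) * (q ^ (k 0) * q ^ (k 1)) * T q (n+1) k := by
    intro k hk
    rw [Finset.Nat.mem_antidiagonalTuple] at hk
    have hs : q ^ (n+1) = q ^ (k 0) * q ^ (k 1) * q ^ (k 2) := by
      rw [← pow_add, ← pow_add, ← hk, Fin.sum_univ_three]
    rw [hs]; ring
  rw [galois3_eq, Finset.mul_sum, Finset.sum_congr rfl per, Finset.sum_add_distrib,
    Finset.sum_add_distrib, key0 hq n (fun _ => (1 : K)),
    key1 hq n (fun k => q ^ (k 0)), key2 hq n (fun k => q ^ (k 0) * q ^ (k 1))]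
  simp only [Matrix.cons_val_zero, Matrix.cons_val_one, Matrix.head_cons, one_mul, mul_one]
  rw [galois3_eq, S1, S2]
  ring

end Galois3Aux

/-- `G_{n+1}^{(3)} = 3G_n^{(3)} + 3(q^n-1)G_{n-1}^{(3)} + (q^n-1)(q^{n-1}-1)G_{n-2}^{(3)}`
for `n ≥ 2`. -/
theorem galois3_recursion (n : ℕ) (hn : 2 ≤ n) :
    galois3 (RatFunc.X : RatFunc ℚ) (n + 1) =
      3 * galois3 (RatFunc.X : RatFunc ℚ) n +
        3 * ((RatFunc.X : RatFunc ℚ) ^ n - 1) * galois3 (RatFunc.X : RatFunc ℚ) (n - 1) +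
        ((RatFunc.X : RatFunc ℚ) ^ n - 1) * ((RatFunc.X : RatFunc ℚ) ^ (n - 1) - 1) *
          galois3 (RatFunc.X : RatFunc ℚ) (n - 2) := by
  have hq : ∀ j : ℕ, 1 ≤ j → 1 - (RatFunc.X : RatFunc ℚ) ^ j ≠ 0 := by
    intro j hj h
    rw [sub_eq_zero] at h
    have hx : (Polynomial.X : Polynomial ℚ) ^ j = 1 := by
      apply RatFunc.algebraMap_injective ℚ
      rw [map_pow, map_one, RatFunc.algebraMap_X]
      exact h.symm
    have := congrArg Polynomial.natDegree hx
    rw [Polynomial.natDegree_X_pow, Polynomial.natDegree_one] at this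
    omega
  obtain ⟨m, rfl⟩ : ∃ m, n = m + 2 := ⟨n - 2, by omega⟩
  have e1 : m + 2 - 1 = m + 1 := rfl
  have e2 : m + 2 - 2 = m := rfl
  rw [e1, e2]
  set q : RatFunc ℚ := RatFunc.X with hqdef
  have p := Galois3Aux.pascal hq (m+2)
  have a := Galois3Aux.sumA hq (m+1)
  have b := Galois3Aux.sumB hq (m+1)
  have c := Galois3Aux.sumC hq m
  have expand : ∑ k ∈ Finset.Nat.antidiagonalTuple 3 (m+2),
      (1 - q ^ (k 0)) * (1 - q ^ (k 1)) * Galois3Aux.T q (m+2) k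
      = galois3 q (m+2) - Galois3Aux.S1 q (m+2) - Galois3Aux.S1' q (m+2)
          + Galois3Aux.S2 q (m+2) := by
    rw [Galois3Aux.galois3_eq, Galois3Aux.S1, Galois3Aux.S1', Galois3Aux.S2,
      ← Finset.sum_sub_distrib, ← Finset.sum_sub_distrib, ← Finset.sum_add_distrib]
    exact Finset.sum_congr rfl fun k _ => by ring
  rw [expand] at c
  linear_combination p + 2 * a + b + c
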